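/- Let P be a set of n points chosen uniformly and independently at random from [0,1]^d, let δ = (c_d (ln n)/n)^{1/d} for a sufficiently large constant c_d, and let p be a point in the fortress [δ, 1−δ]^d. For any cone C with apex p and half-angle π/12, the probability that C contains no point of P other than p is at most n^{−Ω(1)}, where the exponent can be made arbitrarily large by increasing c_d. -/

import Mathlib

open MeasureTheory

section Aux

open Real InnerProductGeometry
open scoped RealInnerProductSpace

/-- coordinate distance is at most Euclidean distance -/
lemma aux_coord_dist {d : ℕ} (x y : EuclideanSpace ℝ (Fin d)) (i : Fin d) :
    dist (x i) (y i) ≤ dist x y := by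
  rw [EuclideanSpace.dist_eq]
  have h1 : dist (x i) (y i) = Real.sqrt (dist (x i) (y i) ^ 2) :=
    (Real.sqrt_sq dist_nonneg).symm
  rw [h1]
  exact Real.sqrt_le_sqrt (Finset.single_le_sum
    (f := fun j => dist (x j) (y j) ^ 2) (fun j _ => sq_nonneg _) (Finset.mem_univ i))

lemma aux_cos_pi_div_twelve_le : Real.cos (Real.pi / 12) ≤ 99 / 101 := by
  have hπ1 : 3 < Real.pi := Real.pi_gt_three
  have hπ2 : Real.pi ≤ 4 := Real.pi_le_four
  have habs : |Real.pi / 12| ≤ 1 := by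
    rw [abs_of_nonneg (by positivity)]; linarith
  have := Real.cos_bound habs
  have h2 : |Real.pi / 12| = Real.pi / 12 := abs_of_nonneg (by positivity)
  rw [h2] at this
  have h3 := abs_le.mp this
  have ha : (1:ℝ)/4 ≤ Real.pi / 12 := by linarith
  have hb : Real.pi / 12 ≤ 1/3 := by linarith
  have h4 : (1:ℝ)/16 ≤ (Real.pi / 12) ^ 2 := by nlinarith
  have h5 : (Real.pi / 12) ^ 4 ≤ (1/3 : ℝ) ^ 4 :=
    pow_le_pow_left₀ (by positivity) hb 4
  have h6 := h3.2
  nlinarith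

/-- The key angle bound : if `x` is in the small ball around `p + (δ/2)•u`
then the angle between `x - p` and `v` is at most `π/12`, and `x ≠ p`. -/
lemma aux_angle {d : ℕ} (p v x : EuclideanSpace ℝ (Fin d)) (hv : v ≠ 0) {δ : ℝ}
    (hδ : 0 < δ)
    (hx : x ∈ Metric.closedBall (p + (δ/2) • (‖v‖⁻¹ • v)) (δ/200)) :
    x ≠ p ∧ InnerProductGeometry.angle (x - p) v ≤ Real.pi / 12 := by
  set u : EuclideanSpace ℝ (Fin d) := ‖v‖⁻¹ • v with hu_def
  have hu : ‖u‖ = 1 := norm_smul_inv_norm hv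
  set w : EuclideanSpace ℝ (Fin d) := x - p with hw_def
  set e : EuclideanSpace ℝ (Fin d) := w - (δ/2) • u with he_def
  have he : ‖e‖ ≤ δ/200 := by
    rw [Metric.mem_closedBall, dist_eq_norm] at hx
    have : x - (p + (δ/2) • u) = e := by simp [he_def, hw_def]; abel
    rwa [this] at hx
  have hsmul : ‖(δ/2) • u‖ = δ/2 := by
    rw [norm_smul, hu, mul_one, Real.norm_eq_abs, abs_of_pos (by linarith)]
  have hw_le : ‖w‖ ≤ δ/2 + δ/200 := by
    have : w = (δ/2) • u + e := by simp [he_def]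
    rw [this]
    calc ‖(δ/2) • u + e‖ ≤ ‖(δ/2) • u‖ + ‖e‖ := norm_add_le _ _
      _ ≤ δ/2 + δ/200 := by rw [hsmul]; linarith
  have hw_ge : δ/2 - δ/200 ≤ ‖w‖ := by
    have h1 : ‖(δ/2) • u‖ ≤ ‖w‖ + ‖e‖ := by
      have : (δ/2) • u = w - e := by simp [he_def]
      rw [this]; exact norm_sub_le _ _
    rw [hsmul] at h1; linarith
  have hw_pos : 0 < ‖w‖ := by linarith
  have hwne : w ≠ 0 := norm_pos_iff.mp hw_pos
  have hvnorm : 0 < ‖v‖ := norm_pos_iff.mpr hv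
  constructor
  · intro h; rw [hw_def] at hwne; apply hwne; rw [h]; simp
  -- inner product bound
  have hinner_uv : ⟪u, v⟫ = ‖v‖ := by
    rw [hu_def, real_inner_smul_left, real_inner_self_eq_norm_mul_norm]
    field_simp
  have hinner_ev : -(δ/200 * ‖v‖) ≤ ⟪e, v⟫ := by
    have h1 : |⟪e, v⟫| ≤ ‖e‖ * ‖v‖ := abs_real_inner_le_norm e v
    have h2 : ‖e‖ * ‖v‖ ≤ δ/200 * ‖v‖ :=
      mul_le_mul_of_nonneg_right he (norm_nonneg v)
    have := neg_abs_le ⟪e, v⟫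
    linarith
  have hinner_wv : (δ/2 - δ/200) * ‖v‖ ≤ ⟪w, v⟫ := by
    have hw_eq : w = (δ/2) • u + e := by simp [he_def]
    rw [hw_eq, inner_add_left, real_inner_smul_left, hinner_uv]
    nlinarith
  -- cosine bound
  have hcos : (99:ℝ)/101 ≤ Real.cos (InnerProductGeometry.angle w v) := by
    rw [InnerProductGeometry.cos_angle]
    rw [le_div_iff₀ (by positivity)]
    have : ‖w‖ * ‖v‖ ≤ (δ/2 + δ/200) * ‖v‖ :=
      mul_le_mul_of_nonneg_right hw_le (norm_nonneg v)
    nlinarith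
  -- conclude
  by_contra h
  push_neg at h
  have h1 : Real.cos (InnerProductGeometry.angle w v) < Real.cos (Real.pi / 12) := by
    apply Real.strictAntiOn_cos
    · constructor
      · positivity
      · linarith [Real.pi_gt_three]
    · exact ⟨InnerProductGeometry.angle_nonneg _ _, InnerProductGeometry.angle_le_pi _ _⟩
    · exact h
  have := aux_cos_pi_div_twelve_le
  linarith

end Aux

/-- For `n` uniform random points in `[0,1]^d`, a point `p` in the fortress
`[δ, 1−δ]^d` with `δ = (c·ln n / n)^{1/d}`, and any cone with apex `p` and half-angle
`π/12`, the probability that the cone contains no point of the sample other than `p`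
is at most `n^{-K}`, where `K` can be made arbitrarily large by increasing `c`. -/
theorem stmt_9 (d : ℕ) (hd : 1 ≤ d) (K : ℝ) (hK : 0 < K) :
    ∃ c : ℝ, 0 < c ∧ ∀ n : ℕ, 2 ≤ n →
      ∀ p : EuclideanSpace ℝ (Fin d),
        (∀ i, (c * Real.log n / n) ^ ((1 : ℝ) / d) ≤ p i ∧
              p i ≤ 1 - (c * Real.log n / n) ^ ((1 : ℝ) / d)) →
      ∀ v : EuclideanSpace ℝ (Fin d), v ≠ 0 →
        Measure.pi (fun _ : Fin n =>
            (volume : Measure (EuclideanSpace ℝ (Fin d))).restrict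
              {x | ∀ i, x i ∈ Set.Icc (0 : ℝ) 1})
          {ω | ∀ i, ω i = p ∨
              ¬ InnerProductGeometry.angle (ω i - p) v ≤ Real.pi / 12}
        ≤ ENNReal.ofReal ((n : ℝ) ^ (-K)) := by
  have hdne : d ≠ 0 := by omega
  haveI : Nonempty (Fin d) := ⟨⟨0, by omega⟩⟩
  set B : ℝ := Real.sqrt Real.pi ^ d / Real.Gamma (d / 2 + 1) with hB_def
  have hB : 0 < B := by
    apply div_pos
    · positivity
    · exact Real.Gamma_pos_of_pos (by positivity)
  refine ⟨max 1 (K * 200 ^ d / B), lt_of_lt_of_le one_pos (le_max_left _ _), ?_⟩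
  set c : ℝ := max 1 (K * 200 ^ d / B) with hc_def
  have hc : 0 < c := lt_of_lt_of_le one_pos (le_max_left _ _)
  have hcB : K * 200 ^ d ≤ c * B := by
    have := le_max_right 1 (K * 200 ^ d / B)
    calc K * 200 ^ d = (K * 200 ^ d / B) * B := by field_simp
      _ ≤ c * B := mul_le_mul_of_nonneg_right this hB.le
  intro n hn p hp v hv
  have hn1 : (1:ℝ) < n := by exact_mod_cast hn.trans_lt' one_lt_two
  have hnpos : (0:ℝ) < n := by linarith
  have hlog : 0 < Real.log n := Real.log_pos hn1
  have hxpos : 0 < c * Real.log n / n := by positivity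
  set δ : ℝ := (c * Real.log n / n) ^ ((1:ℝ)/d) with hδ_def
  have hδ : 0 < δ := Real.rpow_pos_of_pos hxpos _
  have hδd : δ ^ d = c * Real.log n / n := by
    rw [hδ_def, one_div]
    exact Real.rpow_inv_natCast_pow hxpos.le hdne
  set u : EuclideanSpace ℝ (Fin d) := ‖v‖⁻¹ • v with hu_def
  have hu : ‖u‖ = 1 := norm_smul_inv_norm hv
  set q : EuclideanSpace ℝ (Fin d) := p + (δ/2) • u with hq_def
  set r : ℝ := δ/200 with hr_def
  set cube : Set (EuclideanSpace ℝ (Fin d)) := {x | ∀ i, x i ∈ Set.Icc (0:ℝ) 1} with hcube_def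
  set μ : Measure (EuclideanSpace ℝ (Fin d)) := volume.restrict cube with hμ_def
  set E : Set (EuclideanSpace ℝ (Fin d)) :=
    {x | x = p ∨ ¬ InnerProductGeometry.angle (x - p) v ≤ Real.pi / 12} with hE_def
  -- ball inside cube
  have hdist_qp : dist q p = δ/2 := by
    rw [hq_def, dist_eq_norm]
    simp only [add_sub_cancel_left]
    rw [norm_smul, hu, mul_one, Real.norm_eq_abs, abs_of_pos (by linarith)]
  have hball_cube : Metric.closedBall q r ⊆ cube := by
    intro x hx i
    have h1 : dist (x i) (p i) ≤ dist x p := aux_coord_dist x p i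
    have h2 : dist x p ≤ dist x q + dist q p := dist_triangle x q p
    have h3 : dist x q ≤ r := Metric.mem_closedBall.mp hx
    have h4 : dist (x i) (p i) ≤ δ := by rw [hdist_qp] at h2; rw [hr_def] at h3; linarith
    rw [Real.dist_eq] at h4
    have h5 := abs_le.mp h4
    obtain ⟨hpl, hpu⟩ := hp i
    constructor <;> [linarith; linarith]
  -- E avoids the ball
  have hE_sub : E ⊆ (Metric.closedBall q r)ᶜ := by
    intro x hxE hxB
    obtain ⟨hne, hang⟩ := aux_angle p v x hv hδ hxB
    rcases hxE with h | h
    · exact hne h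
    · exact h hang
  -- cube is measurable, volume 1
  have hcube_eq : cube = (MeasurableEquiv.toLp 2 (Fin d → ℝ)).symm ⁻¹'
      (Set.pi Set.univ fun _ => Set.Icc (0:ℝ) 1) := by
    ext x
    constructor
    · intro h i _
      exact h i
    · intro h i
      exact h i (Set.mem_univ i)
  have hpi_meas : MeasurableSet (Set.pi Set.univ fun _ : Fin d => Set.Icc (0:ℝ) 1) :=
    MeasurableSet.univ_pi fun _ => measurableSet_Icc
  have hcube_meas : MeasurableSet cube := by
    rw [hcube_eq]
    exact (MeasurableEquiv.toLp 2 (Fin d → ℝ)).symm.measurable hpi_meas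
  have hcubevol : volume cube = 1 := by
    rw [hcube_eq,
      (EuclideanSpace.volume_preserving_symm_measurableEquiv_toLp (Fin d)).measure_preimage
        hpi_meas.nullMeasurableSet]
    rw [volume_pi_pi]
    simp [Real.volume_Icc]
  have hμuniv : μ Set.univ = 1 := by
    rw [hμ_def, Measure.restrict_apply_univ]; exact hcubevol
  -- measure of the ball
  set α : ℝ := r ^ d * B with hα_def
  have hα0 : 0 ≤ α := by positivity
  have hvb : volume (Metric.closedBall q r) = ENNReal.ofReal α := by
    rw [EuclideanSpace.volume_closedBall, Fintype.card_fin,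
      ← ENNReal.ofReal_pow (by positivity), ← ENNReal.ofReal_mul (by positivity)]
  have hμcb : μ (Metric.closedBall q r) = ENNReal.ofReal α := by
    rw [hμ_def, Measure.restrict_apply measurableSet_closedBall,
      Set.inter_eq_left.mpr hball_cube, hvb]
  have hα1 : α ≤ 1 := by
    have h1 : μ (Metric.closedBall q r) ≤ μ Set.univ := measure_mono (Set.subset_univ _)
    rw [hμcb, hμuniv] at h1
    exact ENNReal.ofReal_le_one.mp h1
  -- bound μ E
  have hμE : μ E ≤ ENNReal.ofReal (1 - α) := by
    calc μ E ≤ μ ((Metric.closedBall q r)ᶜ) := measure_mono hE_sub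
      _ = μ Set.univ - μ (Metric.closedBall q r) :=
          measure_compl measurableSet_closedBall
            (by rw [hμcb]; exact ENNReal.ofReal_ne_top)
      _ = 1 - ENNReal.ofReal α := by rw [hμuniv, hμcb]
      _ = ENNReal.ofReal (1 - α) := by
          rw [ENNReal.ofReal_sub 1 hα0, ENNReal.ofReal_one]
  -- rewrite the event as a product set
  have hset : {ω : Fin n → EuclideanSpace ℝ (Fin d) | ∀ i, ω i = p ∨
      ¬ InnerProductGeometry.angle (ω i - p) v ≤ Real.pi / 12}
      = Set.pi Set.univ (fun _ => E) := by
    ext ω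
    simp [Set.mem_pi, hE_def]
  rw [hset, Measure.pi_pi]
  simp only [Finset.prod_const, Finset.card_univ, Fintype.card_fin]
  -- final chain
  have h1α : 0 ≤ 1 - α := by linarith
  have key : (1 - α) ^ n ≤ (n:ℝ) ^ (-K) := by
    have hαval : α = c * Real.log n / n / 200 ^ d * B := by
      rw [hα_def, hr_def, div_pow, hδd]
    have hnα : K * Real.log n ≤ (n:ℝ) * α := by
      have h200 : (0:ℝ) < 200 ^ d := by positivity
      have hval : (n:ℝ) * α = c * Real.log n / 200 ^ d * B := by
        rw [hαval]; field_simp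
      rw [hval]
      rw [div_mul_eq_mul_div, le_div_iff₀ h200]
      nlinarith [mul_le_mul_of_nonneg_right hcB hlog.le]
    calc (1 - α) ^ n ≤ (Real.exp (-α)) ^ n := by
          apply pow_le_pow_left₀ h1α
          linarith [Real.add_one_le_exp (-α)]
      _ = Real.exp ((n:ℕ) * (-α)) := (Real.exp_nat_mul _ _).symm
      _ ≤ Real.exp (Real.log n * (-K)) := by
          apply Real.exp_le_exp.mpr
          nlinarith
      _ = (n:ℝ) ^ (-K) := (Real.rpow_def_of_pos hnpos _).symm
  calc μ E ^ n ≤ (ENNReal.ofReal (1 - α)) ^ n := pow_le_pow_left' hμE n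
    _ = ENNReal.ofReal ((1 - α) ^ n) := (ENNReal.ofReal_pow h1α n).symm
    _ ≤ ENNReal.ofReal ((n:ℝ) ^ (-K)) := ENNReal.ofReal_le_ofReal key
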